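/- (Lemma 5.1, second inequality.) Let Q : E → E_i have homogeneous type s with degree n = Σ_j s_j, and suppose ‖Q(v)‖ ≤ C for all v ∈ E with ‖v‖ ≤ 1. Then for every w ∈ E' with ‖w‖ ≤ 1, ‖F_i(Q(F^{-1}(w)))‖ ≤ e^{χ_i − Σ_j s_j χ_j + (n+1)ε} · C. -/

import Mathlib

/-- A map `R` from a product of real vector spaces to a real vector space has
homogeneous type `s = (s 0, …, s (ℓ-1))` if scaling the `j`-th component by `a j`
multiplies the value by `∏ j, (a j) ^ (s j)`. -/
def HomogType {ℓ : ℕ} {E : Fin ℓ → Type*} [∀ j, AddCommGroup (E j)] [∀ j, Module ℝ (E j)]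
    {V : Type*} [AddCommGroup V] [Module ℝ V]
    (s : Fin ℓ → ℕ) (R : (∀ j, E j) → V) : Prop :=
  ∀ (a : Fin ℓ → ℝ) (w : ∀ j, E j), R (fun j => a j • w j) = (∏ j, a j ^ s j) • R w

/-- Lemma 5.1, second inequality: for `Q : E → Eᵢ` of homogeneous type `s` bounded by `C`
on the unit ball, `‖Fᵢ (Q (F⁻¹ w))‖ ≤ e^{χ i - ∑ s j • χ j + (n+1) ε} C` on the unit ball,
where `n = ∑ j, s j`. -/
theorem norm_inv_conj_le_of_homogType
    {ℓ : ℕ} (χ : Fin (ℓ + 1) → ℝ) (hmono : StrictMono χ) (hneg : ∀ j, χ j < 0)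
    (E E' : Fin (ℓ + 1) → Type*)
    [∀ j, NormedAddCommGroup (E j)] [∀ j, NormedSpace ℝ (E j)]
    [∀ j, NormedAddCommGroup (E' j)] [∀ j, NormedSpace ℝ (E' j)]
    (ε : ℝ) (hε : 0 < ε)
    (F : ∀ j, E j ≃ₗ[ℝ] E' j)
    (hF : ∀ j, ∀ u : E j,
      Real.exp (χ j - ε) * ‖u‖ ≤ ‖F j u‖ ∧ ‖F j u‖ ≤ Real.exp (χ j + ε) * ‖u‖)
    (i : Fin (ℓ + 1)) (s : Fin (ℓ + 1) → ℕ)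
    (Q : PiLp 2 E → E i) (hQ : HomogType s (fun x : (∀ j, E j) => Q (WithLp.toLp 2 x)))
    (C : ℝ) (hC : ∀ v : PiLp 2 E, ‖v‖ ≤ 1 → ‖Q v‖ ≤ C) :
    ∀ w : PiLp 2 E', ‖w‖ ≤ 1 →
      ‖F i (Q (WithLp.toLp 2 (fun j => (F j).symm (w j))))‖ ≤
        Real.exp (χ i - (∑ j, (s j : ℝ) * χ j) + (((∑ j, s j : ℕ) : ℝ) + 1) * ε) * C := by
  intro w hw
  set v : PiLp 2 E := WithLp.toLp 2 (fun j => (F j).symm (w j)) with hv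
  set a : Fin (ℓ + 1) → ℝ := fun j => Real.exp (χ j - ε) with ha
  set u : PiLp 2 E := WithLp.toLp 2 (fun j => a j • v j) with hu
  have hcomp : ∀ j, ‖u j‖ ≤ ‖w j‖ := by
    intro j
    have := (hF j ((F j).symm (w j))).1
    rw [LinearEquiv.apply_symm_apply] at this
    simpa [hu, ha, hv, norm_smul, abs_of_pos (Real.exp_pos _)] using this
  have hule : ‖u‖ ≤ 1 := by
    have h2 : (0:ℝ) < (2 : ENNReal).toReal := by norm_num
    have h1 : ‖u‖ ≤ ‖w‖ := by
      rw [PiLp.norm_eq_sum h2, PiLp.norm_eq_sum h2]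
      apply Real.rpow_le_rpow (by positivity)
      · exact Finset.sum_le_sum fun j _ =>
          Real.rpow_le_rpow (norm_nonneg _) (hcomp j) (le_of_lt h2)
      · positivity
    exact h1.trans hw
  have hQu : ‖Q u‖ ≤ C := hC u hule
  have hprod : (∏ j, a j ^ s j) = Real.exp (∑ j, (s j : ℝ) * (χ j - ε)) := by
    rw [Real.exp_sum]
    refine Finset.prod_congr rfl fun j _ => ?_
    rw [ha, ← Real.exp_nat_mul]
  have hQeq : Q u = Real.exp (∑ j, (s j : ℝ) * (χ j - ε)) • Q v := by
    have hQa := hQ a v.ofLp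
    simp only [WithLp.toLp_ofLp] at hQa
    rw [hu, hQa, hprod]
  have hQv : ‖Q v‖ ≤ Real.exp (-(∑ j, (s j : ℝ) * (χ j - ε))) * C := by
    have : Q v = Real.exp (-(∑ j, (s j : ℝ) * (χ j - ε))) • Q u := by
      rw [hQeq, smul_smul, ← Real.exp_add, neg_add_cancel, Real.exp_zero, one_smul]
    rw [this, norm_smul, Real.norm_eq_abs, abs_of_pos (Real.exp_pos _)]
    exact mul_le_mul_of_nonneg_left hQu (Real.exp_pos _).le
  have hfin : ‖F i (Q v)‖ ≤ Real.exp (χ i + ε) * ‖Q v‖ := (hF i (Q v)).2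
  calc ‖F i (Q v)‖ ≤ Real.exp (χ i + ε) * (Real.exp (-(∑ j, (s j : ℝ) * (χ j - ε))) * C) :=
        hfin.trans (mul_le_mul_of_nonneg_left hQv (Real.exp_pos _).le)
    _ = Real.exp (χ i - (∑ j, (s j : ℝ) * χ j) + (((∑ j, s j : ℕ) : ℝ) + 1) * ε) * C := by
        rw [← mul_assoc, ← Real.exp_add]
        congr 2
        have : (((∑ j, s j : ℕ) : ℝ)) = ∑ j, (s j : ℝ) := by push_cast; ring
        rw [this]
        simp only [mul_sub, Finset.sum_sub_distrib, ← Finset.sum_mul]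
        ring
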